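/- arXiv:0709.0720 — 2 statements merged into one kernel-verified Lean document; each statement's English description precedes it below -/
import Mathlib

section
/- Let T be a finite connected multigraph whose edges are each labeled either positive or negative, and let η assign to each spanning tree t the number of positive edges of t minus the number of negative edges of t. If e is a positive edge of T such that e lies in no cycle of T consisting entirely of positive edges, then every spanning tree t of T maximizing η contains e. -/
/-- A finite multigraph: vertex type `V`, edge type `E`, each edge has an
unordered pair of endpoints (loops and parallel edges are allowed). -/
structure Multigraph where
  V : Type
  E : Type
  fV : Fintype V
  fE : Fintype E
  dV : DecidableEq V
  dE : DecidableEq E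
  ends : E → Sym2 V

attribute [instance] Multigraph.fV Multigraph.fE Multigraph.dV Multigraph.dE

namespace Multigraph

variable (G : Multigraph)

/-- `u` and `v` are joined by an edge of the edge set `S`. -/
def adjOn (S : Finset G.E) (u v : G.V) : Prop :=
  ∃ e ∈ S, G.ends e = s(u, v)

/-- `u` and `v` are joined by a walk using only edges of `S`. -/
def reach (S : Finset G.E) (u v : G.V) : Prop :=
  Relation.ReflTransGen (G.adjOn S) u v

/-- The spanning subgraph with edge set `S` is connected. -/
def connectedOn (S : Finset G.E) : Prop := ∀ u v : G.V, G.reach S u v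

/-- The multigraph is connected. -/
def Connected : Prop := Nonempty G.V ∧ G.connectedOn Finset.univ

/-- The subgraph with edge set `S` contains no cycle: no edge of `S` has its
endpoints joined within `S` minus that edge. -/
def acyclicOn (S : Finset G.E) : Prop :=
  ∀ e ∈ S, ∀ u v : G.V, G.ends e = s(u, v) → ¬ G.reach (S.erase e) u v

/-- `S` is the edge set of a spanning tree: connected and acyclic spanning
subgraph. -/
def IsSpanningTree (S : Finset G.E) : Prop :=
  G.connectedOn S ∧ G.acyclicOn S

/-- the edge `e` lies in a cycle all of whose edges belong to `S`. -/
def InCycleOn (S : Finset G.E) (e : G.E) : Prop :=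
  e ∈ S ∧ ∃ u v : G.V, G.ends e = s(u, v) ∧ G.reach (S.erase e) u v

/-- the positive edges, for a sign labelling (`true` = positive). -/
def posEdges (sign : G.E → Bool) : Finset G.E :=
  Finset.univ.filter fun e => sign e = true

/-- the negative edges. -/
def negEdges (sign : G.E → Bool) : Finset G.E :=
  Finset.univ.filter fun e => sign e = false

/-- `e` lies in a cycle consisting entirely of positive edges. -/
def InPositiveCycle (sign : G.E → Bool) (e : G.E) : Prop :=
  G.InCycleOn (G.posEdges sign) e

/-- `e` lies in a cycle consisting entirely of negative edges. -/
def InNegativeCycle (sign : G.E → Bool) (e : G.E) : Prop :=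
  G.InCycleOn (G.negEdges sign) e

/-- `η(t)` = (# positive edges of `t`) − (# negative edges of `t`). -/
def eta (sign : G.E → Bool) (t : Finset G.E) : ℤ :=
  ((t.filter fun e => sign e = true).card : ℤ) -
    (t.filter fun e => sign e = false).card

/-- `S` contains a cycle. -/
def Dependent (S : Finset G.E) : Prop := ¬ G.acyclicOn S

/-- `C` is (the edge set of) a cycle: a minimal dependent set. -/
def IsCircuit (C : Finset G.E) : Prop :=
  G.Dependent C ∧ ∀ C' ⊂ C, G.acyclicOn C'

/-- the set of values of `η` on spanning trees. -/
def etaSet (sign : G.E → Bool) : Set ℤ :=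
  {x | ∃ t : Finset G.E, G.IsSpanningTree t ∧ G.eta sign t = x}

end Multigraph

namespace Multigraph

variable (G : Multigraph)

lemma adjOn_symm {S : Finset G.E} {u v : G.V} (h : G.adjOn S u v) : G.adjOn S v u := by
  obtain ⟨f, hf, hends⟩ := h
  exact ⟨f, hf, by rw [hends, Sym2.eq_swap]⟩

lemma reach_symm {S : Finset G.E} {u v : G.V} (h : G.reach S u v) : G.reach S v u :=
  @(@Relation.ReflTransGen.stdSymm _ (G.adjOn S) ⟨fun _ _ hab => G.adjOn_symm hab⟩).symm _ _ h

lemma reach_mono {S T : Finset G.E} (hST : S ⊆ T) {u v : G.V} (h : G.reach S u v) :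
    G.reach T u v :=
  Relation.ReflTransGen.mono (fun _ _ ⟨f, hf, hends⟩ => ⟨f, hST hf, hends⟩) _ _ h

lemma reach_single {S : Finset G.E} {f : G.E} {u v : G.V} (hf : f ∈ S)
    (hends : G.ends f = s(u, v)) : G.reach S u v :=
  Relation.ReflTransGen.single ⟨f, hf, hends⟩

lemma erase_comm' (A : Finset G.E) (x y : G.E) :
    (A.erase x).erase y = (A.erase y).erase x := by
  ext z; simp only [Finset.mem_erase]; tauto

lemma acyclicOn_mono {S T : Finset G.E} (hST : S ⊆ T) (h : G.acyclicOn T) :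
    G.acyclicOn S := by
  intro f hf u v hends hr
  exact h f (hST hf) u v hends (G.reach_mono (Finset.erase_subset_erase f hST) hr)

/-- Decomposition of reachability through `insert f S`. -/
lemma reach_insert {S : Finset G.E} {f : G.E} {a b x y : G.V}
    (hf : G.ends f = s(a, b)) (h : G.reach (insert f S) x y) :
    G.reach S x y ∨
      ((G.reach S x a ∨ G.reach S x b) ∧ (G.reach S y a ∨ G.reach S y b)) := by
  induction h with
  | refl => exact Or.inl Relation.ReflTransGen.refl
  | @tail c d hxc step ih =>
    obtain ⟨g, hg, hends⟩ := step
    rcases Finset.mem_insert.mp hg with rfl | hgS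
    · -- the step uses f, so {c,d} = {a,b}
      rw [hf] at hends
      rcases Sym2.eq_iff.mp hends with ⟨ha, hb⟩ | ⟨ha, hb⟩
      · subst ha; subst hb
        refine Or.inr ⟨?_, Or.inr Relation.ReflTransGen.refl⟩
        rcases ih with h | ⟨hx, _⟩
        · exact Or.inl h
        · exact hx
      · subst ha; subst hb
        refine Or.inr ⟨?_, Or.inl Relation.ReflTransGen.refl⟩
        rcases ih with h | ⟨hx, _⟩
        · exact Or.inr h
        · exact hx
    · rcases ih with h | ⟨hx, hc⟩
      · exact Or.inl (h.tail ⟨g, hgS, hends⟩)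
      · refine Or.inr ⟨hx, ?_⟩
        have hdc : G.reach S d c := G.reach_single hgS (by rw [hends, Sym2.eq_swap])
        rcases hc with h | h
        · exact Or.inl (hdc.trans h)
        · exact Or.inr (hdc.trans h)

/-- Along a walk from inside `Q` to outside `Q` there is a crossing edge. -/
lemma reach_crossing {S : Finset G.E} {u v : G.V} (Q : G.V → Prop)
    (h : G.reach S u v) (hu : Q u) (hv : ¬ Q v) :
    ∃ f ∈ S, ∃ a b, G.ends f = s(a, b) ∧ Q a ∧ ¬ Q b := by
  revert hv
  induction h with
  | refl => exact fun hv => absurd hu hv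
  | @tail c d hxc step ih =>
    intro hv
    by_cases hc : Q c
    · obtain ⟨g, hg, hends⟩ := step
      exact ⟨g, hg, c, d, hends, hc, hv⟩
    · exact ih hc

/-- If `u` and `v` are joined in an acyclic `S` but not via positive edges
only, some negative edge of `S` separates `u` from `v`. -/
lemma findNeg (sign : G.E → Bool) :
    ∀ S : Finset G.E, G.acyclicOn S → ∀ u v : G.V, G.reach S u v →
      ¬ G.reach (S.filter fun g => sign g = true) u v →
      ∃ f ∈ S, sign f = false ∧ ¬ G.reach (S.erase f) u v := by
  intro S
  induction S using Finset.strongInduction with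
  | _ S ih =>
    intro hacyc u v hreach hnpos
    obtain ⟨f, hfS, a, b, hends, hQa, hQb⟩ :=
      G.reach_crossing (fun x => G.reach (S.filter fun g => sign g = true) u x)
        hreach Relation.ReflTransGen.refl hnpos
    have hfneg : sign f = false := by
      rcases Bool.eq_false_or_eq_true (sign f) with h | h
      · exact absurd (hQa.tail ⟨f, Finset.mem_filter.mpr ⟨hfS, h⟩, hends⟩) hQb
      · exact h
    by_cases hr : G.reach (S.erase f) u v
    · -- recurse on S.erase f
      have hsub : S.erase f ⊂ S := Finset.erase_ssubset hfS
      obtain ⟨f', hf'S, hf'neg, hnr⟩ :=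
        ih (S.erase f) hsub (G.acyclicOn_mono (Finset.erase_subset f S) hacyc) u v hr
          (fun h => hnpos (G.reach_mono
            (Finset.filter_subset_filter _ (Finset.erase_subset f S)) h))
      refine ⟨f', Finset.mem_of_mem_erase hf'S, hf'neg, ?_⟩
      intro h2
      have hfne : f ≠ f' := fun h => (Finset.ne_of_mem_erase hf'S) h.symm
      have hins : S.erase f' = insert f ((S.erase f).erase f') := by
        rw [G.erase_comm', Finset.insert_erase
          (Finset.mem_erase.mpr ⟨hfne, hfS⟩)]
      rw [hins] at h2
      have hS0 : (S.erase f).erase f' ⊆ S.erase f := Finset.erase_subset _ _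
      rcases G.reach_insert hends h2 with h | ⟨hu', hv'⟩
      · exact hnr h
      · rcases hu' with hu' | hu' <;> rcases hv' with hv' | hv'
        · exact hnr (hu'.trans (G.reach_symm hv'))
        · -- u~a, v~b : gives a cycle through f
          exact hacyc f hfS a b hends
            ((G.reach_symm (G.reach_mono hS0 hu')).trans
              (hr.trans (G.reach_mono hS0 hv')))
        · exact hacyc f hfS a b hends
            ((G.reach_symm (G.reach_mono hS0 hv')).trans
              ((G.reach_symm hr).trans (G.reach_mono hS0 hu')))
        · exact hnr (hu'.trans (G.reach_symm hv'))
    · exact ⟨f, hfS, hfneg, hr⟩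

end Multigraph

/-- In a finite connected signed multigraph, a positive edge lying
in no all-positive cycle belongs to every `η`-maximizing spanning tree. -/
theorem stmt1 (G : Multigraph) (hconn : G.Connected) (sign : G.E → Bool)
    (e : G.E) (he : sign e = true) (hnc : ¬ G.InPositiveCycle sign e)
    (t : Finset G.E) (ht : G.IsSpanningTree t)
    (hmax : ∀ t' : Finset G.E, G.IsSpanningTree t' →
      G.eta sign t' ≤ G.eta sign t) :
    e ∈ t := by
  by_contra het
  obtain ⟨⟨u, v⟩, huv⟩ := Quot.exists_rep (G.ends e)
  have huv : G.ends e = s(u, v) := huv.symm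
  -- u and v are joined in t
  have hreach_t : G.reach t u v := ht.1 u v
  -- but not via positive edges of t
  have hnpos : ¬ G.reach (t.filter fun g => sign g = true) u v := by
    intro h
    apply hnc
    refine ⟨Finset.mem_filter.mpr ⟨Finset.mem_univ e, he⟩, u, v, huv, ?_⟩
    refine G.reach_mono ?_ h
    intro g hg
    obtain ⟨hgt, hgpos⟩ := Finset.mem_filter.mp hg
    exact Finset.mem_erase.mpr ⟨fun hge => het (hge ▸ hgt),
      Finset.mem_filter.mpr ⟨Finset.mem_univ g, hgpos⟩⟩
  obtain ⟨f, hft, hfneg, hcut⟩ := G.findNeg sign t ht.2 u v hreach_t hnpos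
  have hfe : f ≠ e := fun h => by rw [h, he] at hfneg; exact Bool.noConfusion hfneg
  have hent : e ∉ t.erase f := fun h => het (Finset.mem_of_mem_erase h)
  set t' : Finset G.E := insert e (t.erase f) with ht'def
  have hsub' : t.erase f ⊆ t' := Finset.subset_insert _ _
  have hins_t : insert f (t.erase f) = t := Finset.insert_erase hft
  obtain ⟨⟨a, b⟩, hab⟩ := Quot.exists_rep (G.ends f)
  have hab : G.ends f = s(a, b) := hab.symm
  -- every vertex reaches a or b in t.erase f... first: sides of u and v
  have side : ∀ x : G.V, G.reach (t.erase f) x u ∨ G.reach (t.erase f) x v := by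
    intro x
    have hx : G.reach (insert f (t.erase f)) x u := by rw [hins_t]; exact ht.1 x u
    rcases G.reach_insert hab hx with h | ⟨hxa, hua⟩
    · exact Or.inl h
    · have hv' : G.reach (insert f (t.erase f)) v u := by rw [hins_t]; exact ht.1 v u
      rcases G.reach_insert hab hv' with h | ⟨hva, _⟩
      · exact absurd (G.reach_symm h) hcut
      · -- x ~ {a,b}, u ~ {a,b}, v ~ {a,b}; u,v opposite (hcut)
        rcases hua with hu1 | hu1 <;> rcases hva with hv1 | hv1 <;>
          rcases hxa with hx1 | hx1
        · exact absurd (hu1.trans (G.reach_symm hv1)) hcut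
        · exact absurd (hu1.trans (G.reach_symm hv1)) hcut
        · exact Or.inl (hx1.trans (G.reach_symm hu1))
        · exact Or.inr (hx1.trans (G.reach_symm hv1))
        · exact Or.inr (hx1.trans (G.reach_symm hv1))
        · exact Or.inl (hx1.trans (G.reach_symm hu1))
        · exact absurd (hu1.trans (G.reach_symm hv1)) hcut
        · exact absurd (hu1.trans (G.reach_symm hv1)) hcut
  have heuv : G.reach t' u v := G.reach_single (Finset.mem_insert_self e _) huv
  have hconn' : G.connectedOn t' := by
    intro x y
    rcases side x with hx | hx <;> rcases side y with hy | hy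
    · exact (G.reach_mono hsub' hx).trans (G.reach_symm (G.reach_mono hsub' hy))
    · exact ((G.reach_mono hsub' hx).trans heuv).trans
        (G.reach_symm (G.reach_mono hsub' hy))
    · exact ((G.reach_mono hsub' hx).trans (G.reach_symm heuv)).trans
        (G.reach_symm (G.reach_mono hsub' hy))
    · exact (G.reach_mono hsub' hx).trans (G.reach_symm (G.reach_mono hsub' hy))
  have hacyc' : G.acyclicOn t' := by
    intro g hg c d hends hcd
    rcases Finset.mem_insert.mp hg with rfl | hgt
    · -- g = e
      rw [Finset.erase_insert hent] at hcd
      rw [huv] at hends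
      rcases Sym2.eq_iff.mp hends with ⟨hc, hd⟩ | ⟨hc, hd⟩
      · subst hc; subst hd; exact hcut hcd
      · subst hc; subst hd; exact hcut (G.reach_symm hcd)
    · have hge : g ≠ e := fun h => het (h ▸ Finset.mem_of_mem_erase hgt)
      have : t'.erase g = insert e ((t.erase f).erase g) := by
        rw [ht'def, Finset.erase_insert_of_ne (Ne.symm hge)]
      rw [this] at hcd
      have hS0f : (t.erase f).erase g ⊆ t.erase f := Finset.erase_subset _ _
      have hS0g : (t.erase f).erase g ⊆ t.erase g := by
        rw [G.erase_comm']; exact Finset.erase_subset _ _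
      have hgt' : g ∈ t := Finset.mem_of_mem_erase hgt
      rcases G.reach_insert huv hcd with h | ⟨hc', hd'⟩
      · exact ht.2 g hgt' c d hends (G.reach_mono hS0g h)
      · rcases hc' with hc' | hc' <;> rcases hd' with hd' | hd'
        · exact ht.2 g hgt' c d hends
            ((G.reach_mono hS0g hc').trans (G.reach_symm (G.reach_mono hS0g hd')))
        · -- c~u, d~v : u~v in t.erase f via edge g
          exact hcut ((G.reach_symm (G.reach_mono hS0f hc')).trans
            ((G.reach_single hgt hends).trans (G.reach_mono hS0f hd')))
        · exact hcut ((G.reach_symm (G.reach_mono hS0f hd')).trans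
            ((G.reach_single hgt (by rw [hends, Sym2.eq_swap])).trans
              (G.reach_mono hS0f hc')))
        · exact ht.2 g hgt' c d hends
            ((G.reach_mono hS0g hc').trans (G.reach_symm (G.reach_mono hS0g hd')))
  have htree' : G.IsSpanningTree t' := ⟨hconn', hacyc'⟩
  -- eta computation
  have hposcard : (t'.filter fun g => sign g = true).card =
      (t.filter fun g => sign g = true).card + 1 := by
    rw [ht'def, Finset.filter_insert, if_pos he, Finset.card_insert_of_notMem
      (fun h => hent (Finset.mem_of_mem_filter e h))]
    congr 1
    rw [Finset.filter_erase, Finset.erase_eq_of_notMem]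
    intro h
    rw [(Finset.mem_filter.mp h).2] at hfneg
    exact Bool.noConfusion hfneg
  have hfmem : f ∈ t.filter fun g => sign g = false :=
    Finset.mem_filter.mpr ⟨hft, hfneg⟩
  have hnegcard : (t'.filter fun g => sign g = false).card =
      (t.filter fun g => sign g = false).card - 1 := by
    rw [ht'def, Finset.filter_insert, if_neg (by simp [he]), Finset.filter_erase,
      Finset.card_erase_of_mem hfmem]
  have hcardpos : 1 ≤ (t.filter fun g => sign g = false).card :=
    Finset.card_pos.mpr ⟨f, hfmem⟩
  have heta : G.eta sign t' = G.eta sign t + 2 := by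
    unfold Multigraph.eta
    rw [hposcard, hnegcard, Nat.cast_sub hcardpos]
    push_cast
    ring
  have := hmax t' htree'
  omega
end

section
/- Let T be a finite connected multigraph with edges labeled positive or negative. If e is a negative edge lying in no cycle consisting entirely of negative edges, then every spanning tree minimizing η contains e, where η(t) is the number of positive minus negative edges of t. -/
namespace StmtAux

open Multigraph

variable {G : Multigraph}

lemma adjOn_symm {S : Finset G.E} {u v : G.V} (h : G.adjOn S u v) : G.adjOn S v u := by
  obtain ⟨f, hf, hends⟩ := h
  exact ⟨f, hf, hends.trans (Sym2.eq_swap)⟩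

lemma reach_symm {S : Finset G.E} {u v : G.V} (h : G.reach S u v) : G.reach S v u :=
  (@Relation.ReflTransGen.stdSymm _ _ ⟨fun _ _ hab => adjOn_symm hab⟩).symm _ _ h

lemma reach_mono {S T : Finset G.E} (hST : S ⊆ T) {u v : G.V} (h : G.reach S u v) :
    G.reach T u v :=
  Relation.ReflTransGen.mono (fun _ _ ⟨f, hf, hends⟩ => ⟨f, hST hf, hends⟩) _ _ h

lemma adjOn_reach {S : Finset G.E} {u v : G.V} (h : G.adjOn S u v) : G.reach S u v :=
  Relation.ReflTransGen.single h

/-- decomposition of a walk at an edge `f`. -/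
lemma reach_decomp {S : Finset G.E} (f : G.E) {a b : G.V} (h : G.reach S a b) :
    G.reach (S.erase f) a b ∨
      ∃ x y, G.ends f = s(x, y) ∧ G.reach (S.erase f) a x ∧ G.reach (S.erase f) y b := by
  induction h using Relation.ReflTransGen.head_induction_on with
  | refl => exact Or.inl Relation.ReflTransGen.refl
  | @head a c hac hcb ih =>
    obtain ⟨g, hgS, hg⟩ := hac
    by_cases hgf : g = f
    · subst hgf
      rcases ih with ih | ⟨x, y, hxy, hcx, hyb⟩
      · exact Or.inr ⟨a, c, hg, Relation.ReflTransGen.refl, ih⟩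
      · rw [hg] at hxy
        rw [Sym2.eq_iff] at hxy
        rcases hxy with ⟨rfl, rfl⟩ | ⟨rfl, rfl⟩
        · exact Or.inr ⟨a, c, hg, Relation.ReflTransGen.refl, hyb⟩
        · exact Or.inl hyb
    · have hadj : G.adjOn (S.erase f) a c := ⟨g, Finset.mem_erase.2 ⟨hgf, hgS⟩, hg⟩
      rcases ih with ih | ⟨x, y, hxy, hcx, hyb⟩
      · exact Or.inl (Relation.ReflTransGen.head hadj ih)
      · exact Or.inr ⟨x, y, hxy, Relation.ReflTransGen.head hadj hcx, hyb⟩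

end StmtAux


/-- A negative edge lying in no all-negative cycle belongs to
every `η`-minimizing spanning tree. -/
theorem stmt3 (G : Multigraph) (hconn : G.Connected) (sign : G.E → Bool)
    (e : G.E) (he : sign e = false) (hnc : ¬ G.InNegativeCycle sign e)
    (t : Finset G.E) (ht : G.IsSpanningTree t)
    (hmin : ∀ t' : Finset G.E, G.IsSpanningTree t' →
      G.eta sign t ≤ G.eta sign t') :
    e ∈ t := by
  classical
  open StmtAux in
  by_contra het
  -- endpoints of e
  obtain ⟨⟨u, v⟩, hu'⟩ := Quot.exists_rep (G.ends e)
  have hu : G.ends e = s(u, v) := hu'.symm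
  have htuv : G.reach t u v := ht.1 u v
  -- a minimal subset S of t joining u and v
  obtain ⟨S, hSmem, hSmin⟩ := Finset.exists_min_image
    ((t.powerset).filter fun S => G.reach S u v) Finset.card
    ⟨t, by simp [htuv]⟩
  rw [Finset.mem_filter, Finset.mem_powerset] at hSmem
  obtain ⟨hSt, hSuv⟩ := hSmem
  -- some edge of S is positive
  have hfex : ∃ f ∈ S, sign f = true := by
    by_contra hall
    push_neg at hall
    apply hnc
    refine ⟨by simp [Multigraph.negEdges, he], u, v, hu, ?_⟩
    refine reach_mono ?_ hSuv
    intro g hg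
    refine Finset.mem_erase.2 ⟨?_, ?_⟩
    · rintro rfl; exact het (hSt hg)
    · simp [Multigraph.negEdges, Bool.eq_false_iff.2 (by simpa using hall g hg)]
  obtain ⟨f, hfS, hfpos⟩ := hfex
  have hft : f ∈ t := hSt hfS
  have hfe : f ≠ e := by rintro rfl; exact het hft
  -- minimality: S minus f does not join u and v
  have hnSf : ¬ G.reach (S.erase f) u v := by
    intro hr
    have hlt : S.card ≤ (S.erase f).card := by
      refine hSmin _ ?_
      rw [Finset.mem_filter, Finset.mem_powerset]
      exact ⟨(Finset.erase_subset f S).trans hSt, hr⟩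
    have := Finset.card_erase_lt_of_mem hfS
    omega
  -- decompose the u-v path at f
  rcases reach_decomp f hSuv with h | ⟨x, y, hxy, hux, hyv⟩
  · exact hnSf h
  set t'' := t.erase f with ht''
  have hSft'' : S.erase f ⊆ t'' := Finset.erase_subset_erase f hSt
  have hux2 : G.reach t'' u x := reach_mono hSft'' hux
  have hyv2 : G.reach t'' y v := reach_mono hSft'' hyv
  -- removing f from t disconnects u from v
  have hntuv : ¬ G.reach t'' u v := by
    intro hr
    exact ht.2 f hft x y hxy (((reach_symm hux2).trans hr).trans (reach_symm hyv2))
  -- the exchanged tree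
  set t' := insert e t'' with ht'
  have het'' : e ∉ t'' := fun h => het (Finset.erase_subset f t h)
  have het' : e ∈ t' := Finset.mem_insert_self e t''
  have ht''t' : t'' ⊆ t' := Finset.subset_insert e t''
  have huv' : G.reach t' u v := adjOn_reach ⟨e, het', hu⟩
  have hxy' : G.reach t' x y :=
    ((reach_symm (reach_mono ht''t' hux2)).trans huv').trans
      (reach_symm (reach_mono ht''t' hyv2))
  -- connectivity of t'
  have hconn' : G.connectedOn t' := by
    intro a b
    have hr : G.reach t a b := ht.1 a b
    induction hr using Relation.ReflTransGen.head_induction_on with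
    | refl => exact Relation.ReflTransGen.refl
    | @head a c hac hcb ih =>
      refine Relation.ReflTransGen.trans ?_ ih
      obtain ⟨g, hgt, hg⟩ := hac
      by_cases hgf : g = f
      · subst hgf
        rw [hxy] at hg
        rw [Sym2.eq_iff] at hg
        rcases hg with ⟨rfl, rfl⟩ | ⟨rfl, rfl⟩
        · exact hxy'
        · exact reach_symm hxy'
      · exact adjOn_reach ⟨g, ht''t' (Finset.mem_erase.2 ⟨hgf, hgt⟩), hg⟩
  -- acyclicity of t'
  have hacyc' : G.acyclicOn t' := by
    intro g hgt' p q hpq hr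
    by_cases hge : g = e
    · subst hge
      rw [ht', Finset.erase_insert het''] at hr
      rw [hu] at hpq
      rw [Sym2.eq_iff] at hpq
      rcases hpq with ⟨rfl, rfl⟩ | ⟨rfl, rfl⟩
      · exact hntuv hr
      · exact hntuv (reach_symm hr)
    · have hgt'' : g ∈ t'' := by
        rcases Finset.mem_insert.1 hgt' with h | h
        · exact absurd h hge
        · exact h
      have hgt : g ∈ t := Finset.erase_subset f t hgt''
      have herase : t'.erase g = insert e (t''.erase g) := by
        rw [ht', Finset.erase_insert_of_ne (fun h => hge h.symm)]
      rw [herase] at hr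
      have hee : (insert e (t''.erase g)).erase e = t''.erase g := by
        refine Finset.erase_insert ?_
        intro h
        exact het'' (Finset.erase_subset g t'' h)
      rcases reach_decomp e hr with h | ⟨u', v', hu'', hpu, hvq⟩
      · rw [hee] at h
        exact ht.2 g hgt p q hpq
          (reach_mono (Finset.erase_subset_erase g (Finset.erase_subset f t)) h)
      · rw [hee] at hpu hvq
        have hsub : t''.erase g ⊆ t'' := Finset.erase_subset g t''
        have hadjpq : G.reach t'' p q := adjOn_reach ⟨g, hgt'', hpq⟩
        rw [hu] at hu''
        rw [Sym2.eq_iff] at hu''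
        rcases hu'' with ⟨rfl, rfl⟩ | ⟨rfl, rfl⟩
        · exact hntuv (((reach_symm (reach_mono hsub hpu)).trans hadjpq).trans
            (reach_symm (reach_mono hsub hvq)))
        · exact hntuv (((reach_mono hsub hvq).trans (reach_symm hadjpq)).trans
            (reach_mono hsub hpu))
  have ht'tree : G.IsSpanningTree t' := ⟨hconn', hacyc'⟩
  -- eta computation
  have hfilt : ∀ p : G.E → Prop, ∀ inst : DecidablePred p,
      t''.filter p = (t.filter p).erase f := by
    intro p inst
    rw [ht'']
    exact Finset.filter_erase (p := p) f t
  have hpos' : (t'.filter fun g => sign g = true) =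
      (t.filter fun g => sign g = true).erase f := by
    rw [ht', Finset.filter_insert, if_neg (by simp [he]), hfilt]
  have hneg' : (t'.filter fun g => sign g = false) =
      insert e (t.filter fun g => sign g = false) := by
    rw [ht', Finset.filter_insert, if_pos he, hfilt]
    congr 1
    refine Finset.erase_eq_of_notMem ?_
    simp [hfpos]
  have hfmem : f ∈ t.filter fun g => sign g = true := Finset.mem_filter.2 ⟨hft, hfpos⟩
  have hemem : e ∉ t.filter fun g => sign g = false := fun h => het (Finset.mem_filter.1 h).1
  have hcard1 : ((t'.filter fun g => sign g = true).card : ℤ) =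
      ((t.filter fun g => sign g = true).card : ℤ) - 1 := by
    rw [hpos', Finset.card_erase_of_mem hfmem]
    have : 1 ≤ (t.filter fun g => sign g = true).card := Finset.card_pos.2 ⟨f, hfmem⟩
    push_cast [this]
    ring
  have hcard2 : ((t'.filter fun g => sign g = false).card : ℤ) =
      ((t.filter fun g => sign g = false).card : ℤ) + 1 := by
    rw [hneg', Finset.card_insert_of_notMem hemem]
    push_cast
    ring
  have heta : G.eta sign t' = G.eta sign t - 2 := by
    unfold Multigraph.eta
    rw [hcard1, hcard2]
    ring
  have := hmin t' ht'tree
  rw [heta] at this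
  omega
end
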